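/- Let T ∈ ℕ, ε > 0, v ∈ [0,1], M_v > 0, and set γ := (1/ε)^{(1−v)/(1+v)}·M_v^{2/(1+v)}. Let d : ℝ^p → ℝ be a differentiable 1-strongly convex function with Bregman distance ξ, with x_0 a minimizer of d, let h : ℝ^p → ℝ be convex, and for each t = 0,…,T let g_t : ℝ^p → ℝ be convex and differentiable with Hölder continuous gradient of exponent v and constant at most M_v. Define φ_0(x) := ξ(x_0, x) and φ_{t+1}(x) := φ_t(x) + (1/(2γ))·[g_t(x_t) + ⟨∇g_t(x_t), x − x_t⟩ + h(x)], let x_{t+1} be a minimizer of φ_{t+1}, and let y_t be a minimizer over x of g_t(x_t) + ⟨∇g_t(x_t), x − x_t⟩ + 2γ·ξ(x_t, x) + h(x). Then for every x* ∈ ℝ^p, ∑_{t=0}^{T} [(g_t(y_t) + h(y_t)) − (g_t(x*) + h(x*))] ≤ (ε/2)·(T+1) + 2·ξ(x_0, x*)·γ. -/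

import Mathlib

open scoped InnerProductSpace

set_option maxHeartbeats 1000000

-- slope limit helpers
lemma aux_tendsto_slope (F : ℝ → ℝ) (D : ℝ) (hF : HasDerivAt F D 0) :
    Filter.Tendsto (fun l => (F l - F 0) / l) (nhdsWithin 0 (Set.Ioi 0)) (nhds D) := by
  have h1 := hasDerivAt_iff_tendsto_slope.mp hF
  have h2 : nhdsWithin (0:ℝ) (Set.Ioi 0) ≤ nhdsWithin 0 {(0:ℝ)}ᶜ := by
    apply nhdsWithin_mono
    intro a ha
    exact ne_of_gt ha
  have := h1.mono_left h2
  have heq : (fun l => (F l - F 0) / l) = slope F 0 := by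
    funext l
    simp [slope_def_field, div_eq_div_iff]
  rw [heq]
  exact this

lemma aux_le_of_slope (F : ℝ → ℝ) (D c : ℝ) (hF : HasDerivAt F D 0)
    (hc : ∀ l ∈ Set.Ioc (0:ℝ) 1, c ≤ (F l - F 0) / l) : c ≤ D := by
  refine ge_of_tendsto (aux_tendsto_slope F D hF) ?_
  filter_upwards [Ioc_mem_nhdsGT_of_mem (by norm_num : (0:ℝ) ∈ Set.Ico (0:ℝ) 1)] with l hl
  exact hc l hl

lemma aux_slope_le (F : ℝ → ℝ) (D c : ℝ) (hF : HasDerivAt F D 0)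
    (hc : ∀ l ∈ Set.Ioc (0:ℝ) 1, (F l - F 0) / l ≤ c) : D ≤ c := by
  refine le_of_tendsto (aux_tendsto_slope F D hF) ?_
  filter_upwards [Ioc_mem_nhdsGT_of_mem (by norm_num : (0:ℝ) ∈ Set.Ico (0:ℝ) 1)] with l hl
  exact hc l hl

-- derivative of f along a line
lemma aux_hasDerivAt_line {p : ℕ} (f : EuclideanSpace ℝ (Fin p) → ℝ)
    (x u : EuclideanSpace ℝ (Fin p)) (hf : DifferentiableAt ℝ f x) :
    HasDerivAt (fun l : ℝ => f (x + l • u)) ⟪gradient f x, u⟫_ℝ 0 := by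
  have hline : HasDerivAt (fun l : ℝ => x + l • u) u 0 := by
    simpa using ((hasDerivAt_id (0:ℝ)).smul_const u).const_add x
  have hfd := hf.hasGradientAt.hasFDerivAt
  have hfd' : HasFDerivAt f
      ((InnerProductSpace.toDual ℝ (EuclideanSpace ℝ (Fin p))) (gradient f x))
      (x + (0:ℝ) • u) := by
    simpa using hfd
  have := hfd'.comp_hasDerivAt (0:ℝ) hline
  simpa [Function.comp_def, InnerProductSpace.toDual_apply_apply] using this

-- first-order condition for convex differentiable functions
lemma aux_convex_lower {p : ℕ} (f : EuclideanSpace ℝ (Fin p) → ℝ)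
    (hf : ConvexOn ℝ Set.univ f) (hdiff : Differentiable ℝ f)
    (x z : EuclideanSpace ℝ (Fin p)) :
    f x + ⟪gradient f x, z - x⟫_ℝ ≤ f z := by
  have hD := aux_hasDerivAt_line f x (z - x) (hdiff x)
  have key : ⟪gradient f x, z - x⟫_ℝ ≤ f z - f x := by
    refine aux_slope_le _ _ _ hD ?_
    intro l hl
    obtain ⟨hl0, hl1⟩ := hl
    have hcvx := hf.2 (Set.mem_univ x) (Set.mem_univ z) (by linarith : (0:ℝ) ≤ 1 - l)
      (le_of_lt hl0) (by ring)
    simp only [smul_eq_mul] at hcvx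
    have hpt : x + l • (z - x) = (1 - l) • x + l • z := by
      rw [smul_sub, sub_smul, one_smul]
      abel
    rw [div_le_iff₀ hl0]
    have h0 : x + (0:ℝ) • (z - x) = x := by simp
    rw [hpt, h0]
    calc f ((1 - l) • x + l • z) - f x ≤ (1 - l) * f x + l * f z - f x := by linarith
      _ = (f z - f x) * l := by ring
  linarith

-- minimizer shift lemma
lemma aux_min_shift {p : ℕ} (q r : EuclideanSpace ℝ (Fin p) → ℝ)
    (hq : ConvexOn ℝ Set.univ q) (x z : EuclideanSpace ℝ (Fin p))
    (hr0 : r x = 0)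
    (hr : HasDerivAt (fun l : ℝ => r (x + l • (z - x))) 0 0)
    (hmin : ∀ w, q x ≤ q w + r w) : q x ≤ q z := by
  have key : q x - q z ≤ 0 := by
    refine aux_le_of_slope _ _ _ hr ?_
    intro l hl
    obtain ⟨hl0, hl1⟩ := hl
    have h0 : x + (0:ℝ) • (z - x) = x := by simp
    rw [h0, hr0, sub_zero, le_div_iff₀ hl0]
    have hpt : x + l • (z - x) = (1 - l) • x + l • z := by
      rw [smul_sub, sub_smul, one_smul]; abel
    have hcvx := hq.2 (Set.mem_univ x) (Set.mem_univ z) (by linarith : (0:ℝ) ≤ 1 - l)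
      (le_of_lt hl0) (by ring)
    simp only [smul_eq_mul] at hcvx
    have hm := hmin (x + l • (z - x))
    rw [hpt] at hm ⊢
    nlinarith
  linarith

-- convexity of affine + nonneg multiple of convex
lemma aux_convexOn_affine_add {p : ℕ} (a : EuclideanSpace ℝ (Fin p)) (K c : ℝ)
    (hc : 0 ≤ c) (h : EuclideanSpace ℝ (Fin p) → ℝ) (hh : ConvexOn ℝ Set.univ h) :
    ConvexOn ℝ Set.univ (fun z => K + ⟪a, z⟫_ℝ + c * h z) := by
  refine ⟨convex_univ, fun u _ w _ s t hs ht hst => ?_⟩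
  have hhh := hh.2 (Set.mem_univ u) (Set.mem_univ w) hs ht hst
  simp only [smul_eq_mul] at hhh ⊢
  rw [inner_add_right, inner_smul_right, inner_smul_right]
  have hK : s * K + t * K = K := by rw [← add_mul, hst, one_mul]
  nlinarith [mul_le_mul_of_nonneg_left hhh hc]

-- the key Young-type inequality
lemma aux_young (ε v Mv γ : ℝ) (hε : 0 < ε) (hv0 : 0 ≤ v) (hv1 : v ≤ 1) (hMv : 0 < Mv)
    (hγ : γ = (1 / ε) ^ ((1 - v) / (1 + v)) * Mv ^ (2 / (1 + v))) :
    ∀ s : ℝ, 0 ≤ s → Mv * s ^ (1 + v) ≤ γ * s ^ 2 + ε / 2 := by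
  have h1v : (0:ℝ) < 1 + v := by linarith
  have hγpos : 0 < γ := by rw [hγ]; positivity
  intro s hs
  rcases eq_or_lt_of_le hv1 with hv1' | hv1'
  · -- v = 1
    subst hv1'
    have hγM : γ = Mv := by
      rw [hγ]
      norm_num
    have h2 : s ^ ((1:ℝ) + 1) = s ^ 2 := by
      rw [show ((1:ℝ) + 1) = ((2:ℕ):ℝ) by norm_num, Real.rpow_natCast]
    rw [hγM, h2]
    linarith
  · -- v < 1
    have h1v' : (0:ℝ) < 1 - v := by linarith
    set P := 2 / (1 + v) with hP
    set Q := 2 / (1 - v) with hQ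
    have hpq : P.HolderConjugate Q := by
      refine Real.holderConjugate_iff.mpr ⟨?_, ?_⟩
      · rw [hP]
        rw [lt_div_iff₀ h1v]
        linarith
      · rw [hP, hQ, inv_div, inv_div]
        ring
    have hcpos : (0:ℝ) < 2 * γ / (1 + v) := by positivity
    set c := 2 * γ / (1 + v) with hc
    set a := c ^ ((1 + v) / 2) * s ^ (1 + v) with ha'
    set b := Mv * c ^ (-((1 + v) / 2)) with hb'
    have ha : 0 ≤ a := by positivity
    have hb : 0 ≤ b := by positivity
    have hab : a * b = Mv * s ^ (1 + v) := by
      rw [ha', hb']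
      have : c ^ ((1 + v) / 2) * c ^ (-((1 + v) / 2)) = 1 := by
        rw [← Real.rpow_add hcpos]
        norm_num
      calc c ^ ((1 + v) / 2) * s ^ (1 + v) * (Mv * c ^ (-((1 + v) / 2)))
          = (c ^ ((1 + v) / 2) * c ^ (-((1 + v) / 2))) * (Mv * s ^ (1 + v)) := by ring
        _ = Mv * s ^ (1 + v) := by rw [this]; ring
    have hap : a ^ P / P = γ * s ^ 2 := by
      rw [ha', Real.mul_rpow (by positivity) (by positivity)]
      have e1 : (c ^ ((1 + v) / 2)) ^ P = c := by
        rw [← Real.rpow_mul hcpos.le, hP]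
        rw [show (1 + v) / 2 * (2 / (1 + v)) = 1 by field_simp]
        exact Real.rpow_one c
      have e2 : (s ^ (1 + v)) ^ P = s ^ 2 := by
        rw [← Real.rpow_mul hs, hP]
        rw [show (1 + v) * (2 / (1 + v)) = ((2:ℕ):ℝ) by field_simp; norm_num]
        exact Real.rpow_natCast s 2
      rw [e1, e2, hP, hc]
      field_simp
    have hbq : b ^ Q / Q ≤ ε / 2 := by
      have e0 : b ^ Q = Mv ^ Q * c ^ (-((1 + v) / 2) * Q) := by
        rw [hb', Real.mul_rpow hMv.le (by positivity), ← Real.rpow_mul hcpos.le]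
      have eexp : -((1 + v) / 2) * Q = -((1 + v) / (1 - v)) := by
        rw [hQ]; field_simp
      have ec : c ^ (-((1 + v) / (1 - v)))
          = (2 / (1 + v)) ^ (-((1 + v) / (1 - v))) * γ ^ (-((1 + v) / (1 - v))) := by
        rw [hc, show 2 * γ / (1 + v) = (2 / (1 + v)) * γ by ring,
          Real.mul_rpow (by positivity) hγpos.le]
      have eγ : γ ^ (-((1 + v) / (1 - v))) = ε * Mv ^ (-(2 / (1 - v))) := by
        rw [hγ, hP, Real.mul_rpow (by positivity) (by positivity),
          ← Real.rpow_mul (by positivity : (0:ℝ) ≤ 1/ε),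
          ← Real.rpow_mul hMv.le]
        rw [show (1 - v) / (1 + v) * -((1 + v) / (1 - v)) = -1 by field_simp,
          show 2 / (1 + v) * -((1 + v) / (1 - v)) = -(2 / (1 - v)) by field_simp]
        rw [Real.rpow_neg_one, one_div, inv_inv]
      have eMv : Mv ^ Q * Mv ^ (-(2 / (1 - v))) = 1 := by
        rw [← Real.rpow_add hMv, hQ]
        norm_num
      have e2 : b ^ Q = (2 / (1 + v)) ^ (-((1 + v) / (1 - v))) * ε := by
        rw [e0, eexp, ec, eγ]
        calc Mv ^ Q * ((2 / (1 + v)) ^ (-((1 + v) / (1 - v))) * (ε * Mv ^ (-(2 / (1 - v)))))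
            = (Mv ^ Q * Mv ^ (-(2 / (1 - v)))) * ((2 / (1 + v)) ^ (-((1 + v) / (1 - v))) * ε) := by
              ring
          _ = (2 / (1 + v)) ^ (-((1 + v) / (1 - v))) * ε := by rw [eMv, one_mul]
      have ebase : (2 / (1 + v)) ^ (-((1 + v) / (1 - v))) ≤ 1 := by
        rw [Real.rpow_neg (by positivity), ← Real.inv_rpow (by positivity), inv_div]
        exact Real.rpow_le_one (by positivity) (by rw [div_le_one (by norm_num)]; linarith)
          (by positivity)
      have hQpos : (0:ℝ) < Q := by rw [hQ]; positivity
      rw [e2, div_le_iff₀ hQpos]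
      have h1 : (2 / (1 + v)) ^ (-((1 + v) / (1 - v))) * ε ≤ ε :=
        by nlinarith [Real.rpow_nonneg (by positivity : (0:ℝ) ≤ 2 / (1+v)) (-((1 + v) / (1 - v)))]
      have h2 : ε ≤ ε / 2 * Q := by
        rw [hQ]
        have hd : (2:ℝ) ≤ 2 / (1 - v) := by
          rw [le_div_iff₀ h1v']
          nlinarith
        nlinarith
      linarith
    calc Mv * s ^ (1 + v) = a * b := hab.symm
      _ ≤ a ^ P / P + b ^ Q / Q := Real.young_inequality_of_nonneg ha hb hpq
      _ ≤ γ * s ^ 2 + ε / 2 := by rw [hap]; linarith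

/-- O-UDGM regret bound with fixed step size `L_{t+1} = γ := (1/ε)^{(1−v)/(1+v)}·M_v^{2/(1+v)}`.
`d` is differentiable 1-strongly convex with Bregman distance
`ξ(x,y) = d(y) − d(x) − ⟨∇d(x), y − x⟩`, `x 0` minimizes `d`, `h` is convex, each `g t` is
convex differentiable with Hölder continuous gradient of exponent `v` and constant at most
`M_v`; `φ_0(x) = ξ(x_0, x)`,
`φ_{t+1}(x) = φ_t(x) + (1/(2γ))[g_t(x_t) + ⟨∇g_t(x_t), x − x_t⟩ + h(x)]`, `x (t+1)` minimizes
`φ_{t+1}` and `y t` minimizes `x ↦ g_t(x_t) + ⟨∇g_t(x_t), x − x_t⟩ + 2γ·ξ(x_t, x) + h(x)`.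
Then for every `x*`,
`∑_{t=0}^{T} [(g_t(y_t) + h(y_t)) − (g_t(x*) + h(x*))] ≤ (ε/2)(T+1) + 2ξ(x_0,x*)γ`. -/
theorem statement12 {p : ℕ} (T : ℕ) (ε v Mv γ : ℝ) (hε : 0 < ε)
    (hv0 : 0 ≤ v) (hv1 : v ≤ 1) (hMv : 0 < Mv)
    (hγ : γ = (1 / ε) ^ ((1 - v) / (1 + v)) * Mv ^ (2 / (1 + v)))
    (d : EuclideanSpace ℝ (Fin p) → ℝ) (hd : Differentiable ℝ d)
    (hdsc : ∀ x y : EuclideanSpace ℝ (Fin p),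
      d x + ⟪gradient d x, y - x⟫_ℝ + 1 / 2 * ‖y - x‖ ^ 2 ≤ d y)
    (xi : EuclideanSpace ℝ (Fin p) → EuclideanSpace ℝ (Fin p) → ℝ)
    (hxi : ∀ x y : EuclideanSpace ℝ (Fin p), xi x y = d y - d x - ⟪gradient d x, y - x⟫_ℝ)
    (h : EuclideanSpace ℝ (Fin p) → ℝ) (hh : ConvexOn ℝ Set.univ h)
    (g : ℕ → EuclideanSpace ℝ (Fin p) → ℝ)
    (hgconv : ∀ t ≤ T, ConvexOn ℝ Set.univ (g t))
    (hgdiff : ∀ t ≤ T, Differentiable ℝ (g t))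
    (hHolder : ∀ t ≤ T, ∀ x y : EuclideanSpace ℝ (Fin p),
      ‖gradient (g t) x - gradient (g t) y‖ ≤ Mv * ‖x - y‖ ^ v)
    (x : ℕ → EuclideanSpace ℝ (Fin p))
    (hx0 : ∀ z : EuclideanSpace ℝ (Fin p), d (x 0) ≤ d z)
    (φ : ℕ → EuclideanSpace ℝ (Fin p) → ℝ)
    (hφ0 : ∀ z : EuclideanSpace ℝ (Fin p), φ 0 z = xi (x 0) z)
    (hφsucc : ∀ t ≤ T, ∀ z : EuclideanSpace ℝ (Fin p),
      φ (t + 1) z = φ t z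
        + 1 / (2 * γ) * (g t (x t) + ⟪gradient (g t) (x t), z - x t⟫_ℝ + h z))
    (hxmin : ∀ t ≤ T, ∀ z : EuclideanSpace ℝ (Fin p), φ (t + 1) (x (t + 1)) ≤ φ (t + 1) z)
    (y : ℕ → EuclideanSpace ℝ (Fin p))
    (hymin : ∀ t ≤ T, ∀ z : EuclideanSpace ℝ (Fin p),
      g t (x t) + ⟪gradient (g t) (x t), y t - x t⟫_ℝ + 2 * γ * xi (x t) (y t) + h (y t)
        ≤ g t (x t) + ⟪gradient (g t) (x t), z - x t⟫_ℝ + 2 * γ * xi (x t) z + h z) :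
    ∀ xstar : EuclideanSpace ℝ (Fin p),
      ∑ t ∈ Finset.range (T + 1), ((g t (y t) + h (y t)) - (g t xstar + h xstar))
        ≤ ε / 2 * (T + 1) + 2 * xi (x 0) xstar * γ := by
  intro xstar
  have hγpos : 0 < γ := by rw [hγ]; positivity
  have h2γ : (0:ℝ) < 2 * γ := by linarith
  have hxi_sq : ∀ a b, 1 / 2 * ‖b - a‖ ^ 2 ≤ xi a b := by
    intro a b; rw [hxi]; have := hdsc a b; linarith
  have hxi0 : ∀ a, xi a a = 0 := by intro a; rw [hxi]; simp
  have hxinn : ∀ a b, 0 ≤ xi a b := fun a b => le_trans (by positivity) (hxi_sq a b)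
  -- closed form of φ
  have hφeq : ∀ n, n ≤ T + 1 → ∀ z, φ n z
      = xi (x 0) z + 1 / (2 * γ)
        * ∑ t ∈ Finset.range n, (g t (x t) + ⟪gradient (g t) (x t), z - x t⟫_ℝ + h z) := by
    intro n
    induction n with
    | zero => intro _ z; simp [hφ0]
    | succ m ih =>
      intro hn z
      have hm : m ≤ T := by omega
      rw [hφsucc m hm z, ih (by omega) z, Finset.sum_range_succ]
      ring
  -- φ n is minimized at x n
  have hφmin : ∀ n, n ≤ T + 1 → ∀ w, φ n (x n) ≤ φ n w := by
    intro n hn w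
    cases n with
    | zero =>
      rw [hφ0, hφ0, hxi0]
      exact hxinn _ _
    | succ m => exact hxmin m (by omega) w
  -- Bregman lower bound at the minimizer
  have hφlb : ∀ n, n ≤ T + 1 → ∀ z, φ n (x n) + xi (x n) z ≤ φ n z := by
    intro n hn z
    set q : EuclideanSpace ℝ (Fin p) → ℝ := fun w => φ n w - xi (x n) w with hqdef
    -- convexity of q
    have hsum : ∀ w : EuclideanSpace ℝ (Fin p),
        ∑ t ∈ Finset.range n, (g t (x t) + ⟪gradient (g t) (x t), w - x t⟫_ℝ + h w)
        = (∑ t ∈ Finset.range n, (g t (x t) - ⟪gradient (g t) (x t), x t⟫_ℝ))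
          + ⟪∑ t ∈ Finset.range n, gradient (g t) (x t), w⟫_ℝ + (n : ℝ) * h w := by
      intro w
      rw [sum_inner, Finset.sum_sub_distrib]
      simp only [inner_sub_right]
      rw [Finset.sum_add_distrib, Finset.sum_add_distrib, Finset.sum_sub_distrib,
        Finset.sum_const, Finset.card_range, nsmul_eq_mul]
      ring
    set K : ℝ := d (x n) - d (x 0) - ⟪gradient d (x n), x n⟫_ℝ + ⟪gradient d (x 0), x 0⟫_ℝ
      + 1 / (2 * γ) * (∑ t ∈ Finset.range n, (g t (x t) - ⟪gradient (g t) (x t), x t⟫_ℝ))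
      with hK
    set V : EuclideanSpace ℝ (Fin p) := (gradient d (x n) - gradient d (x 0))
      + (1 / (2 * γ)) • (∑ t ∈ Finset.range n, gradient (g t) (x t)) with hV
    set cc : ℝ := (n : ℝ) * (1 / (2 * γ)) with hcc
    have hqe : q = fun w => K + ⟪V, w⟫_ℝ + cc * h w := by
      funext w
      simp only [hqdef]
      rw [hφeq n hn w, hxi, hxi, hsum w, hK, hV, hcc]
      simp only [inner_add_left, inner_sub_left, inner_sub_right, real_inner_smul_left]
      ring
    have hqconv : ConvexOn ℝ Set.univ q := by
      rw [hqe]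
      exact aux_convexOn_affine_add V K cc (by positivity) h hh
    have hr0 : xi (x n) (x n) = 0 := hxi0 _
    have hrD : HasDerivAt (fun l : ℝ => xi (x n) (x n + l • (z - x n))) 0 0 := by
      have hd1 := aux_hasDerivAt_line d (x n) (z - x n) (hd _)
      have hd2 : HasDerivAt
          (fun l : ℝ => ⟪gradient d (x n), (x n + l • (z - x n)) - x n⟫_ℝ)
          ⟪gradient d (x n), z - x n⟫_ℝ 0 := by
        have he : (fun l : ℝ => ⟪gradient d (x n), (x n + l • (z - x n)) - x n⟫_ℝ)
            = fun l : ℝ => ⟪gradient d (x n), z - x n⟫_ℝ * l := by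
          funext l
          rw [add_sub_cancel_left, real_inner_smul_right]
          ring
        rw [he]
        simpa using (hasDerivAt_id (0:ℝ)).const_mul ⟪gradient d (x n), z - x n⟫_ℝ
      have := (hd1.sub_const (d (x n))).sub hd2
      simp only [hxi]
      simpa [Pi.sub_def] using this
    have hkey := aux_min_shift q (xi (x n)) hqconv (x n) z hr0 hrD (by
      intro w
      have := hφmin n hn w
      simp only [hqdef]
      rw [hr0]
      linarith)
    simp only [hqdef] at hkey
    rw [hr0] at hkey
    linarith
  -- per-step descent bound
  have hstep : ∀ t, t ≤ T → g t (y t) + h (y t) - ε / 2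
      ≤ g t (x t) + ⟪gradient (g t) (x t), x (t + 1) - x t⟫_ℝ
        + 2 * γ * xi (x t) (x (t + 1)) + h (x (t + 1)) := by
    intro t ht
    have hL1 := aux_convex_lower (g t) (hgconv t ht) (hgdiff t ht) (y t) (x t)
    have hpow : ‖y t - x t‖ ^ v * ‖y t - x t‖ = ‖y t - x t‖ ^ (1 + v) := by
      rcases eq_or_lt_of_le (norm_nonneg (y t - x t)) with h0 | h0
      · rw [← h0, Real.zero_rpow (by linarith : (1:ℝ) + v ≠ 0), mul_zero]
      · rw [Real.rpow_add h0, Real.rpow_one]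
        ring
    have hca : ⟪gradient (g t) (y t) - gradient (g t) (x t), y t - x t⟫_ℝ
        ≤ Mv * ‖y t - x t‖ ^ (1 + v) := by
      calc ⟪gradient (g t) (y t) - gradient (g t) (x t), y t - x t⟫_ℝ
          ≤ ‖gradient (g t) (y t) - gradient (g t) (x t)‖ * ‖y t - x t‖ :=
            real_inner_le_norm _ _
        _ ≤ (Mv * ‖y t - x t‖ ^ v) * ‖y t - x t‖ :=
            mul_le_mul_of_nonneg_right (hHolder t ht (y t) (x t)) (norm_nonneg _)
        _ = Mv * (‖y t - x t‖ ^ v * ‖y t - x t‖) := by ring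
        _ = Mv * ‖y t - x t‖ ^ (1 + v) := by rw [hpow]
    have hsplit : ⟪gradient (g t) (y t), x t - y t⟫_ℝ
        = -⟪gradient (g t) (x t), y t - x t⟫_ℝ
          - ⟪gradient (g t) (y t) - gradient (g t) (x t), y t - x t⟫_ℝ := by
      rw [inner_sub_left, show x t - y t = -(y t - x t) from (neg_sub _ _).symm,
        inner_neg_right]
      ring
    rw [hsplit] at hL1
    have hyoung := aux_young ε v Mv γ hε hv0 hv1 hMv hγ ‖y t - x t‖ (norm_nonneg _)
    have hsc : γ * ‖y t - x t‖ ^ 2 ≤ 2 * γ * xi (x t) (y t) := by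
      nlinarith [hxi_sq (x t) (y t)]
    have hY := hymin t ht (x (t + 1))
    linarith
  -- main induction
  have hmain : ∀ n, n ≤ T + 1 →
      ∑ t ∈ Finset.range n, (g t (y t) + h (y t) - ε / 2) ≤ 2 * γ * φ n (x n) := by
    intro n
    induction n with
    | zero =>
      intro _
      rw [Finset.range_zero, Finset.sum_empty, hφ0, hxi0]
      simp
    | succ m ih =>
      intro hn
      have hm : m ≤ T := by omega
      have ih' := ih (by omega)
      rw [Finset.sum_range_succ]
      have e1 := hφsucc m hm (x (m + 1))
      have e2 := hφlb m (by omega) (x (m + 1))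
      have e3 := hstep m hm
      have e2' : 2 * γ * φ m (x m) + 2 * γ * xi (x m) (x (m + 1))
          ≤ 2 * γ * φ m (x (m + 1)) := by nlinarith
      have e1' : 2 * γ * φ (m + 1) (x (m + 1)) = 2 * γ * φ m (x (m + 1))
          + (g m (x m) + ⟪gradient (g m) (x m), x (m + 1) - x m⟫_ℝ + h (x (m + 1))) := by
        rw [e1]
        field_simp
      linarith
  -- conclude
  have hfinal := hmain (T + 1) le_rfl
  have hT := hxmin T le_rfl xstar
  have hlin : ∀ t ∈ Finset.range (T + 1),
      g t (x t) + ⟪gradient (g t) (x t), xstar - x t⟫_ℝ + h xstar ≤ g t xstar + h xstar := by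
    intro t ht'
    have ht : t ≤ T := by
      have := Finset.mem_range.mp ht'
      omega
    have := aux_convex_lower (g t) (hgconv t ht) (hgdiff t ht) (x t) xstar
    linarith
  have hsle := Finset.sum_le_sum hlin
  have hφstar : 2 * γ * φ (T + 1) xstar ≤ 2 * γ * xi (x 0) xstar
      + ∑ t ∈ Finset.range (T + 1), (g t xstar + h xstar) := by
    rw [hφeq (T + 1) le_rfl xstar]
    have hre : 2 * γ * (xi (x 0) xstar + 1 / (2 * γ)
        * ∑ t ∈ Finset.range (T + 1),
          (g t (x t) + ⟪gradient (g t) (x t), xstar - x t⟫_ℝ + h xstar))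
        = 2 * γ * xi (x 0) xstar + ∑ t ∈ Finset.range (T + 1),
          (g t (x t) + ⟪gradient (g t) (x t), xstar - x t⟫_ℝ + h xstar) := by
      field_simp
    rw [hre]
    linarith
  have hTm : 2 * γ * φ (T + 1) (x (T + 1)) ≤ 2 * γ * φ (T + 1) xstar := by nlinarith
  have hs1 : ∑ t ∈ Finset.range (T + 1), (g t (y t) + h (y t) - ε / 2)
      = ∑ t ∈ Finset.range (T + 1), (g t (y t) + h (y t)) - (T + 1 : ℝ) * (ε / 2) := by
    rw [Finset.sum_sub_distrib, Finset.sum_const, Finset.card_range, nsmul_eq_mul]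
    push_cast
    ring
  have hs2 : ∑ t ∈ Finset.range (T + 1), ((g t (y t) + h (y t)) - (g t xstar + h xstar))
      = ∑ t ∈ Finset.range (T + 1), (g t (y t) + h (y t))
        - ∑ t ∈ Finset.range (T + 1), (g t xstar + h xstar) := Finset.sum_sub_distrib _ _
  rw [hs2]
  rw [hs1] at hfinal
  push_cast
  linarith
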